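/- Let τ ∈ ℂ with Im τ > 0 and let κ ∈ ℂ be such that 2κ ∉ ℤ + τℤ. Then the function z ↦ ϑ₁(z+κ,τ) + ϑ₁(z−κ,τ) is not a scalar multiple of z ↦ ϑ₁(z,τ); that is, there is no constant c ∈ ℂ with ϑ₁(z+κ,τ) + ϑ₁(z−κ,τ) = c·ϑ₁(z,τ) for all z ∈ ℂ. -/

import Mathlib

open Complex

/-- Jacobi's first theta function
`ϑ₁(z,τ) = −∑_{m∈ℤ} exp(πi(m+1/2)²τ + 2πi(m+1/2)(z+1/2))` (here `theta1 τ z = ϑ₁(z,τ)`). -/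
noncomputable def theta1 (τ z : ℂ) : ℂ :=
  -∑' m : ℤ, Complex.exp ((Real.pi : ℂ) * Complex.I * ((m : ℂ) + 1 / 2) ^ 2 * τ +
    2 * (Real.pi : ℂ) * Complex.I * ((m : ℂ) + 1 / 2) * (z + 1 / 2))

open MeasureTheory

noncomputable def thA (τ : ℂ) (m : ℤ) : ℂ :=
  Complex.exp ((Real.pi : ℂ) * Complex.I * ((m : ℂ) + 1 / 2) ^ 2 * τ +
    (Real.pi : ℂ) * Complex.I * ((m : ℂ) + 1 / 2))

noncomputable def thE (m : ℤ) (w : ℂ) : ℂ :=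
  Complex.exp (2 * (Real.pi : ℂ) * Complex.I * ((m : ℂ) + 1 / 2) * w)

lemma thE_add (m : ℤ) (a b : ℂ) : thE m (a + b) = thE m a * thE m b := by
  rw [thE, thE, thE, ← Complex.exp_add]; congr 1; ring

lemma term_eq (τ z : ℂ) (m : ℤ) :
    Complex.exp ((Real.pi : ℂ) * Complex.I * ((m : ℂ) + 1 / 2) ^ 2 * τ +
      2 * (Real.pi : ℂ) * Complex.I * ((m : ℂ) + 1 / 2) * (z + 1 / 2)) = thA τ m * thE m z := by
  rw [thA, thE, ← Complex.exp_add]; congr 1; ring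

lemma summable_thAE (τ : ℂ) (hτ : 0 < τ.im) (z : ℂ) :
    Summable fun m : ℤ => thA τ m * thE m z := by
  have h := ((summable_jacobiTheta₂_term_iff (z + 1/2 + τ/2) τ).mpr hτ).mul_left
    (Complex.exp ((Real.pi : ℂ) * Complex.I * τ / 4 + (Real.pi : ℂ) * Complex.I * (z + 1/2)))
  refine h.congr fun m => ?_
  rw [jacobiTheta₂_term, ← Complex.exp_add, thA, thE, ← Complex.exp_add]
  congr 1; ring

lemma theta1_eq (τ z : ℂ) : theta1 τ z = -∑' m : ℤ, thA τ m * thE m z := by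
  rw [theta1]; congr 1; exact tsum_congr fun m => term_eq τ z m

lemma fourier_ext {c : ℤ → ℂ} (hc : Summable c)
    (h : ∀ x : ℝ, ∑' m : ℤ, c m * Complex.exp (2 * (Real.pi : ℂ) * I * ((m : ℂ) + 1/2) * x) = 0)
    (k : ℤ) : c k = 0 := by
  set μ : Measure ℝ := volume.restrict (Set.Ioc (0:ℝ) 1) with hμ
  set F : ℤ → ℝ → ℂ := fun m x => c m * Complex.exp (2 * (Real.pi : ℂ) * I * ((m : ℂ) - (k : ℂ)) * x) with hF
  have contF : ∀ m, Continuous (F m) := by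
    intro m
    exact continuous_const.mul (Complex.continuous_exp.comp (continuous_const.mul continuous_ofReal))
  have hF_int : ∀ m, Integrable (F m) μ := fun m => (contF m).integrableOn_Ioc
  have normF : ∀ m (x : ℝ), ‖F m x‖ = ‖c m‖ := by
    intro m x
    rw [hF, norm_mul, Complex.norm_exp]
    have : (2 * (Real.pi : ℂ) * I * ((m : ℂ) - (k : ℂ)) * x).re = 0 := by
      simp [Complex.mul_re, Complex.mul_im]
    rw [this, Real.exp_zero, mul_one]
  have intnorm : ∀ m, ∫ x, ‖F m x‖ ∂μ = ‖c m‖ := by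
    intro m
    simp only [normF, hμ, integral_const, Measure.restrict_apply_univ, Real.volume_Ioc]
    norm_num
  have hF_sum : Summable fun m => ∫ x, ‖F m x‖ ∂μ := by
    simp only [intnorm]; exact hc.norm
  have key := hasSum_integral_of_summable_integral_norm hF_int hF_sum
  have tsumF : ∀ x : ℝ, ∑' m : ℤ, F m x = 0 := by
    intro x
    have step : ∀ m : ℤ, F m x =
        Complex.exp (-(2 * (Real.pi : ℂ) * I * ((k : ℂ) + 1/2) * x)) *
          (c m * Complex.exp (2 * (Real.pi : ℂ) * I * ((m : ℂ) + 1/2) * x)) := by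
      intro m
      simp only [hF]
      rw [show Complex.exp (-(2 * (Real.pi : ℂ) * I * ((k : ℂ) + 1/2) * (x:ℂ))) *
          (c m * Complex.exp (2 * (Real.pi : ℂ) * I * ((m : ℂ) + 1/2) * (x:ℂ)))
          = c m * (Complex.exp (2 * (Real.pi : ℂ) * I * ((m : ℂ) + 1/2) * (x:ℂ)) *
            Complex.exp (-(2 * (Real.pi : ℂ) * I * ((k : ℂ) + 1/2) * (x:ℂ)))) from by ring,
        ← Complex.exp_add]
      congr 1
      ring
    rw [tsum_congr step, tsum_mul_left, h x, mul_zero]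
  have hzero : (∫ x, (∑' m : ℤ, F m x) ∂μ) = 0 := by
    simp only [tsumF, integral_zero]
  rw [hzero] at key
  have vals : ∀ m : ℤ, (∫ x, F m x ∂μ) = if m = k then c k else 0 := by
    intro m
    have : (∫ x, F m x ∂μ) = ∫ x in (0:ℝ)..1, F m x := by
      rw [intervalIntegral.integral_of_le zero_le_one]
    rw [this, hF]
    simp only []
    rw [intervalIntegral.integral_const_mul]
    by_cases hmk : m = k
    · subst hmk
      simp only [sub_self, mul_zero, zero_mul, Complex.exp_zero]
      simp
    · have hcc : 2 * (Real.pi : ℂ) * I * ((m : ℂ) - (k : ℂ)) ≠ 0 := by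
        have h1 : ((m : ℂ) - (k : ℂ)) ≠ 0 := sub_ne_zero.mpr (by exact_mod_cast hmk)
        simp [Real.pi_ne_zero, Complex.I_ne_zero, h1]
      have : ∀ x : ℝ, 2 * (Real.pi : ℂ) * I * ((m : ℂ) - (k : ℂ)) * (x : ℂ)
          = (2 * (Real.pi : ℂ) * I * ((m : ℂ) - (k : ℂ))) * (x : ℂ) := fun x => rfl
      rw [show (fun x : ℝ => Complex.exp (2 * (Real.pi : ℂ) * I * ((m : ℂ) - (k : ℂ)) * x))
          = fun x : ℝ => Complex.exp ((2 * (Real.pi : ℂ) * I * ((m : ℂ) - (k : ℂ))) * x) from rfl]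
      rw [integral_exp_mul_complex hcc]
      have e1 : Complex.exp (2 * (Real.pi : ℂ) * I * ((m : ℂ) - (k : ℂ)) * (1:ℝ)) = 1 := by
        have := Complex.exp_int_mul_two_pi_mul_I (m - k)
        rw [← this]; congr 1; push_cast; ring
      have e0 : Complex.exp (2 * (Real.pi : ℂ) * I * ((m : ℂ) - (k : ℂ)) * (0:ℝ)) = 1 := by
        norm_num
      rw [e1, e0]
      simp [hmk]
  rw [show (fun m => ∫ x, F m x ∂μ) = (fun m => if m = k then c k else 0) from funext vals] at key
  exact (hasSum_ite_eq k (c k)).unique key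

/-- If `2κ ∉ ℤ + τℤ`, then `z ↦ ϑ₁(z+κ) + ϑ₁(z−κ)` is not a scalar multiple of
`z ↦ ϑ₁(z)`. -/
theorem theta1_shift_sum_not_multiple (τ : ℂ) (hτ : 0 < τ.im) (κ : ℂ)
    (hκ : ¬∃ m l : ℤ, 2 * κ = (m : ℂ) + τ * (l : ℂ)) :
    ¬∃ c : ℂ, ∀ z : ℂ, theta1 τ (z + κ) + theta1 τ (z - κ) = c * theta1 τ z := by
  rintro ⟨c, hc⟩
  set d : ℤ → ℂ := fun m => thA τ m * (thE m κ + thE m (-κ) - c) with hd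
  have hsum : ∀ w : ℂ, Summable fun m : ℤ => thA τ m * thE m w := summable_thAE τ hτ
  -- summability of pieces with extra thE m w factor
  have hsum2 : ∀ w₁ w₂ : ℂ, Summable fun m : ℤ => thA τ m * thE m w₁ * thE m w₂ := by
    intro w₁ w₂
    exact (hsum (w₁ + w₂)).congr fun m => by rw [thE_add]; ring
  have hd_summable : Summable d := by
    have h1 := hsum2 κ 0
    have h2 := hsum2 (-κ) 0
    have h3 := (hsum 0).mul_left c
    have := (h1.add h2).sub h3
    refine this.congr fun m => ?_
    have e0 : thE m 0 = 1 := by rw [thE]; simp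
    simp only [hd, e0, mul_one]
    ring
  have hzero : ∀ x : ℝ, ∑' m : ℤ, d m * Complex.exp (2 * (Real.pi : ℂ) * I * ((m : ℂ) + 1/2) * x) = 0 := by
    intro x
    have hx := hc (x : ℂ)
    rw [theta1_eq, theta1_eq, theta1_eq] at hx
    -- rewrite shifted sums
    have e1 : ∑' m : ℤ, thA τ m * thE m ((x : ℂ) + κ)
        = ∑' m : ℤ, thA τ m * thE m κ * thE m (x : ℂ) := by
      exact tsum_congr fun m => by rw [thE_add]; ring
    have e2 : ∑' m : ℤ, thA τ m * thE m ((x : ℂ) - κ)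
        = ∑' m : ℤ, thA τ m * thE m (-κ) * thE m (x : ℂ) := by
      refine tsum_congr fun m => ?_
      rw [sub_eq_add_neg, thE_add]; ring
    have e3 : c * ∑' m : ℤ, thA τ m * thE m (x : ℂ)
        = ∑' m : ℤ, c * (thA τ m * thE m (x : ℂ)) := (tsum_mul_left).symm
    rw [e1, e2] at hx
    have combined : ∑' m : ℤ, (thA τ m * thE m κ * thE m (x : ℂ)
        + thA τ m * thE m (-κ) * thE m (x : ℂ) - c * (thA τ m * thE m (x : ℂ))) = 0 := by
      rw [Summable.tsum_sub ((hsum2 κ x).add (hsum2 (-κ) x)) ((hsum x).mul_left c),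
        Summable.tsum_add (hsum2 κ x) (hsum2 (-κ) x), ← e3]
      linear_combination -hx
    rw [← combined]
    refine tsum_congr fun m => ?_
    have : thE m (x : ℂ) = Complex.exp (2 * (Real.pi : ℂ) * I * ((m : ℂ) + 1/2) * x) := rfl
    rw [hd, ← this]
    ring
  have hd0 := fourier_ext hd_summable hzero 0
  have hd1 := fourier_ext hd_summable hzero 1
  have hA0 : thA τ 0 ≠ 0 := Complex.exp_ne_zero _
  have hA1 : thA τ 1 ≠ 0 := Complex.exp_ne_zero _
  simp only [hd] at hd0 hd1
  have key0 : thE 0 κ + thE 0 (-κ) = c := by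
    rcases mul_eq_zero.mp hd0 with h | h
    · exact absurd h hA0
    · exact sub_eq_zero.mp h
  have key1 : thE 1 κ + thE 1 (-κ) = c := by
    rcases mul_eq_zero.mp hd1 with h | h
    · exact absurd h hA1
    · exact sub_eq_zero.mp h
  set u : ℂ := Complex.exp ((Real.pi : ℂ) * I * κ) with hu
  have hune : u ≠ 0 := Complex.exp_ne_zero _
  have u0 : thE 0 κ = u := by
    rw [thE, hu]; congr 1; push_cast; ring
  have u0' : thE 0 (-κ) = u⁻¹ := by
    rw [thE, hu, ← Complex.exp_neg]; congr 1; push_cast; ring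
  have u1 : thE 1 κ = u ^ 3 := by
    rw [thE, hu, ← Complex.exp_nat_mul]; congr 1; push_cast; ring
  have u1' : thE 1 (-κ) = (u ^ 3)⁻¹ := by
    rw [thE, hu, ← Complex.exp_nat_mul, ← Complex.exp_neg]; congr 1; push_cast; ring
  rw [u0, u0'] at key0
  rw [u1, u1'] at key1
  have heq : u + u⁻¹ = u ^ 3 + (u ^ 3)⁻¹ := key0.trans key1.symm
  have hpoly : (u ^ 2 - 1) * (u ^ 4 - 1) = 0 := by
    have h3 : u ^ 3 ≠ 0 := pow_ne_zero 3 hune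
    field_simp at heq
    have hpoly' : u * ((u ^ 2 - 1) * (u ^ 4 - 1)) = 0 := by linear_combination (-u) * heq
    exact (mul_eq_zero.mp hpoly').resolve_left hune
  have hu4 : u ^ 4 = 1 := by
    rcases mul_eq_zero.mp hpoly with h | h
    · have h2 : u ^ 2 = 1 := by linear_combination h
      calc u ^ 4 = (u ^ 2) ^ 2 := by ring
        _ = 1 := by rw [h2]; ring
    · linear_combination h
  have hexp : Complex.exp ((4 : ℕ) * ((Real.pi : ℂ) * I * κ)) = 1 := by
    rw [Complex.exp_nat_mul, ← hu, hu4]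
  obtain ⟨n, hn⟩ := Complex.exp_eq_one_iff.mp hexp
  have hπ : (Real.pi : ℂ) ≠ 0 := Complex.ofReal_ne_zero.mpr Real.pi_ne_zero
  have hcancel : (2 * (Real.pi : ℂ) * I) * (2 * κ) = (2 * (Real.pi : ℂ) * I) * n := by
    push_cast at hn ⊢
    linear_combination hn
  have h2κ : 2 * κ = (n : ℂ) := mul_left_cancel₀ (by simp [hπ, Complex.I_ne_zero]) hcancel
  exact hκ ⟨n, 0, by simp [h2κ]⟩
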